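/- Assume T ≥ 3. For every grid point z_k ∈ Z_θ and every t = 0,…,T−3, one has ε̄_t(z_k) ≤ U^ε_t(z_k) ≤ Ū^ε_t(θ). -/

import Mathlib

open MeasureTheory Filter Set

noncomputable def Paux (α θ : ℝ) (γ : ℕ → ℝ) (F : ℕ → ℝ → ℝ) (s : ℕ → ℝ) : ℕ → ℕ → ℝ → ℝ
  | 0, _, _ => 0
  | d + 1, τ, y =>
      α * F τ (y + θ - s (τ + 1)) * (γ (τ + 1) + Paux α θ γ F s d (τ + 1) (y + θ))

lemma Paux_succ (α θ : ℝ) (γ : ℕ → ℝ) (F : ℕ → ℝ → ℝ) (s : ℕ → ℝ) (d τ : ℕ) (y : ℝ) :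
    Paux α θ γ F s (d + 1) τ y
      = α * F τ (y + θ - s (τ + 1)) * (γ (τ + 1) + Paux α θ γ F s d (τ + 1) (y + θ)) := by
  simp [Paux]

lemma Paux_eq (α θ : ℝ) (γ : ℕ → ℝ) (F : ℕ → ℝ → ℝ) (s : ℕ → ℝ) :
    ∀ (d τ : ℕ) (y : ℝ), Paux α θ γ F s d τ y =
      ∑ n ∈ Finset.Icc 1 d, α ^ n * γ (τ + n)
        * ∏ m ∈ Finset.range n, F (τ + m) (y + ((m : ℝ) + 1) * θ - s (τ + m + 1)) := by
  intro d
  induction d with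
  | zero => intro τ y; simp [Paux]
  | succ d ih =>
    intro τ y
    have hIcc : ∀ (D : ℕ) (g : ℕ → ℝ), ∑ n ∈ Finset.Icc 1 D, g n
        = ∑ i ∈ Finset.range D, g (1 + i) := by
      intro D g
      rw [← Finset.Ico_add_one_right_eq_Icc, Finset.sum_Ico_eq_sum_range]
      simp
    rw [hIcc]
    rw [Finset.sum_range_succ']
    have h0 : α ^ (1 + 0) * γ (τ + (1 + 0))
        * ∏ m ∈ Finset.range (1 + 0), F (τ + m) (y + ((m : ℝ) + 1) * θ - s (τ + m + 1))
        = α * F τ (y + θ - s (τ + 1)) * γ (τ + 1) := by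
      norm_num
      ring
    have hstep : ∀ i, α ^ (1 + (i + 1)) * γ (τ + (1 + (i + 1)))
        * ∏ m ∈ Finset.range (1 + (i + 1)), F (τ + m) (y + ((m : ℝ) + 1) * θ - s (τ + m + 1))
        = α * F τ (y + θ - s (τ + 1)) *
          (α ^ (1 + i) * γ (τ + 1 + (1 + i))
            * ∏ m ∈ Finset.range (1 + i), F (τ + 1 + m) ((y + θ) + ((m : ℝ) + 1) * θ - s (τ + 1 + m + 1))) := by
      intro i
      have hprod : ∏ m ∈ Finset.range (1 + (i + 1)), F (τ + m) (y + ((m : ℝ) + 1) * θ - s (τ + m + 1))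
          = (∏ m ∈ Finset.range (1 + i), F (τ + 1 + m) ((y + θ) + ((m : ℝ) + 1) * θ - s (τ + 1 + m + 1)))
            * F τ (y + θ - s (τ + 1)) := by
        have h11 : (1 + (i + 1)) = (1 + i) + 1 := by omega
        rw [h11, Finset.prod_range_succ']
        congr 1
        · apply Finset.prod_congr rfl
          intro m _
          have h1 : τ + (m + 1) = τ + 1 + m := by omega
          rw [h1]
          congr 1
          push_cast
          ring
        · norm_num
      rw [hprod, show τ + (1 + (i + 1)) = τ + 1 + (1 + i) from by omega,
        show (1 + (i + 1)) = (1 + i) + 1 from by omega, pow_succ]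
      ring
    rw [h0]
    rw [Finset.sum_congr rfl (fun i _ => hstep i)]
    rw [Paux_succ, ih (τ + 1) (y + θ),
      hIcc d (fun n => α ^ n * γ (τ + 1 + n)
        * ∏ m ∈ Finset.range n, F (τ + 1 + m) ((y + θ) + ((m : ℝ) + 1) * θ - s (τ + 1 + m + 1)))]
    rw [← Finset.mul_sum]
    ring

lemma Paux_nonneg (α θ : ℝ) (γ : ℕ → ℝ) (F : ℕ → ℝ → ℝ) (s : ℕ → ℝ) (T : ℕ)
    (hα : 0 ≤ α) (hF0 : ∀ t x, 0 ≤ F t x) (hγ : ∀ t, t < T → 0 ≤ γ t) :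
    ∀ d τ, τ + d < T → ∀ y : ℝ, 0 ≤ Paux α θ γ F s d τ y := by
  intro d
  induction d with
  | zero => intro τ _ y; simp [Paux]
  | succ d ih =>
    intro τ hτ y
    rw [Paux_succ]
    exact mul_nonneg (mul_nonneg hα (hF0 _ _))
      (add_nonneg (hγ (τ + 1) (by omega)) (ih (τ + 1) (by omega) (y + θ)))

lemma Paux_mono (α θ : ℝ) (γ : ℕ → ℝ) (F : ℕ → ℝ → ℝ) (s : ℕ → ℝ) (T : ℕ)
    (hα : 0 ≤ α) (hF0 : ∀ t x, 0 ≤ F t x) (hFm : ∀ t, Monotone (F t))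
    (hγ : ∀ t, t < T → 0 ≤ γ t) :
    ∀ d τ, τ + d < T → ∀ y z : ℝ, y ≤ z →
      Paux α θ γ F s d τ y ≤ Paux α θ γ F s d τ z := by
  intro d
  induction d with
  | zero => intro τ _ y z _; simp [Paux]
  | succ d ih =>
    intro τ hτ y z hyz
    rw [Paux_succ, Paux_succ]
    have h1 : F τ (y + θ - s (τ + 1)) ≤ F τ (z + θ - s (τ + 1)) := hFm τ (by linarith)
    have h2 := ih (τ + 1) (by omega) (y + θ) (z + θ) (by linarith)
    exact mul_le_mul (mul_le_mul_of_nonneg_left h1 hα) (add_le_add (le_refl _) h2)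
      (add_nonneg (hγ (τ + 1) (by omega))
        (Paux_nonneg α θ γ F s T hα hF0 hγ d (τ + 1) (by omega) (y + θ)))
      (mul_nonneg hα (hF0 _ _))

theorem stmt19
    (T : ℕ) (hT : 2 ≤ T) (hT3 : 3 ≤ T)
    (α : ℝ) (hα0 : 0 < α) (hα1 : α ≤ 1)
    (K : ℕ → ℝ) (hK0 : ∀ t, t < T → 0 ≤ K t)
    (hKmono : ∀ t, t + 2 ≤ T → α * K (t + 1) ≤ K t)
    (ν : ℕ → MeasureTheory.Measure ℝ)
    (hprob : ∀ t, MeasureTheory.IsProbabilityMeasure (ν t))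
    (hpos : ∀ t, ν t (Set.Iio 0) = 0)
    (F : ℕ → ℝ → ℝ) (hF : ∀ t x, F t x = (ν t (Set.Iic x)).toReal)
    (C : ℕ → ℝ → ℝ)
    (hCconv : ∀ t, t < T → ConvexOn ℝ Set.univ (C t))
    (hCcoer : ∀ t, t < T → Filter.Tendsto (C t) (Filter.cocompact ℝ) Filter.atTop)
    (θ : ℝ) (hθ : 0 < θ)
    (f : ℕ → ℤ → ℝ)
    (hf : ∀ t (n : ℤ), f t n = F t (((n : ℝ) + 1) * θ) - F t ((n : ℝ) * θ))
    (Cm SU : ℕ → ℝ)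
    (hCm : ∀ t, t < T → IsLeast {x | ∀ y, C t x ≤ C t y} (Cm t))
    (hSU : ∀ t, t < T → ∀ n0 : ℤ, (n0 : ℝ) * θ < Cm t → Cm t ≤ ((n0 : ℝ) + 1) * θ →
      IsLeast {w | (∃ m : ℤ, w = (m : ℝ) * θ) ∧ Cm t ≤ w ∧ C t ((n0 : ℝ) * θ) + K t < C t w} (SU t))
    (s S : ℕ → ℝ) (I Ibar : ℕ → ℝ)
    (hsT1a : s (T - 1) ≤ Cm (T - 1))
    (hsT1b : C (T - 1) (s (T - 1)) = C (T - 1) (Cm (T - 1)) + K (T - 1))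
    (hIbarT1 : Ibar (T - 1) = s (T - 1))
    (hI : ∀ t, t + 2 ≤ T →
      IsGreatest {w | (∃ m : ℤ, w = (m : ℝ) * θ) ∧ w < min (Ibar (t + 1) - θ) (Cm t)} (I t))
    (hIbar : ∀ t, t + 2 ≤ T →
      IsGreatest {w | (∃ m : ℤ, w = (m : ℝ) * θ) ∧ w ≤ I t ∧ C t (I t) + K t < C t w} (Ibar t - θ))
    (H V : ℕ → ℝ → ℝ)
    (hHT1 : ∀ y, H (T - 1) y = C (T - 1) y)
    (hST1 : S (T - 1) = Cm (T - 1))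
    (hV : ∀ t, t < T → ∀ y, V t y = if y < s t then H t (S t) + K t else H t y)
    (hHrec : ∀ t, t + 2 ≤ T → ∀ y,
      H t y = C t y + α * ∑' n : ℕ, V (t + 1) (y - ((n : ℝ) - 1) * θ) * f t ((n : ℤ) - 1))
    (hSdef : ∀ t, t + 2 ≤ T →
      IsGreatest {w | (∃ m : ℤ, w = (m : ℝ) * θ) ∧ I t ≤ w ∧ w ≤ SU t ∧
        ∀ u, (∃ n : ℤ, u = (n : ℝ) * θ) → I t ≤ u → u ≤ SU t → H t w ≤ H t u} (S t))
    (hsdef0 : ∀ t, t + 2 ≤ T → K t = 0 → s t = S t)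
    (hsdef1 : ∀ t, t + 2 ≤ T → 0 < K t →
      IsLeast {w | (∃ m : ℤ, w = (m : ℝ) * θ) ∧ Ibar t ≤ w ∧ w ≤ S t ∧ H t w ≤ H t (S t) + K t} (s t))
    (γ : ℕ → ℝ) (hγ : ∀ t, t < T → 0 ≤ γ t)
    (hLip : ∀ t, t < T → ∀ x y, |C t x - C t y| ≤ γ t * |x - y|)
    (psib phib : ℕ → ℝ → ℝ → ℝ)
    (hpsibT1 : ∀ x y : ℝ, psib (T - 1) x y = γ (T - 1) * x)
    (hphibT1 : ∀ x y : ℝ, phib (T - 1) x y = if y < s (T - 1) then 0 else γ (T - 1) * x)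
    (hpsibA : ∀ t, t + 2 ≤ T → ∀ x y : ℝ, y < s (t + 1) - θ → psib t x y = γ t * x)
    (hpsibB : ∀ t, t + 2 ≤ T → ∀ x y : ℝ, s (t + 1) - θ ≤ y → ∀ n : ℤ,
      ((n : ℝ) - 1) * θ ≤ y - s (t + 1) → y - s (t + 1) < (n : ℝ) * θ →
      psib t x y = γ t * x
        + α * ∑ j ∈ Finset.Icc (-1 : ℤ) (n - 1), phib (t + 1) x (y - (j : ℝ) * θ) * f t j)
    (hphib : ∀ t, t + 2 ≤ T → ∀ x y : ℝ, phib t x y =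
      if y < s t then 0 else if y - x < s t then psib t (y - s t + θ) y else psib t x y)
    (lam : ℕ → ℤ → ℕ → ℝ)
    (hlam0 : ∀ t k, lam t k 0 = (k : ℝ) * θ)
    (hlamS : ∀ t k i, lam t k (i + 1) = max (lam t k i) (S (t + i)) + θ)
    (epsb : ℕ → ℤ → ℝ)
    (hepsbT2 : ∀ k, epsb (T - 2) k = α * γ (T - 1) * θ)
    (hepsbRec : ∀ t k, t + 3 ≤ T → epsb t k =
      α ^ (T - 1 - t) * γ (T - 1) * θ
        + ∑ i ∈ Finset.range (T - 2 - t),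
            2 * α ^ i * (psib (t + i) θ (max (lam t k i) (S (t + i))) - γ (t + i) * θ))
    :
    ∀ t, t + 3 ≤ T → ∀ k : ℤ,
      (epsb t k ≤
        α ^ (T - 1 - t) * γ (T - 1) * θ
          + 2 * θ * ∑ i ∈ Finset.range (T - 2 - t), ∑ n ∈ Finset.Icc 1 (T - 1 - t - i),
              α ^ (n + i) * γ (t + i + n)
                * ∏ m ∈ Finset.range n,
                    F (t + i + m) (max (lam t k i) (S (t + i)) + ((m : ℝ) + 1) * θ - s (t + i + m + 1)))
      ∧ (α ^ (T - 1 - t) * γ (T - 1) * θ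
          + 2 * θ * ∑ i ∈ Finset.range (T - 2 - t), ∑ n ∈ Finset.Icc 1 (T - 1 - t - i),
              α ^ (n + i) * γ (t + i + n)
                * ∏ m ∈ Finset.range n,
                    F (t + i + m) (max (lam t k i) (S (t + i)) + ((m : ℝ) + 1) * θ - s (t + i + m + 1)))
        ≤ α ^ (T - 1 - t) * γ (T - 1) * θ
          + 2 * θ * ∑ i ∈ Finset.range (T - 2 - t), ∑ n ∈ Finset.Icc 1 (T - 1 - t - i),
              α ^ (n + i) * γ (t + i + n) := by
  -- basic facts about F and f
  have Fmono : ∀ t, Monotone (F t) := by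
    intro t a b hab
    rw [hF, hF]
    have := hprob t
    exact ENNReal.toReal_mono (MeasureTheory.measure_ne_top _ _)
      (MeasureTheory.measure_mono (Set.Iic_subset_Iic.2 hab))
  have F0 : ∀ t x, 0 ≤ F t x := by intro t x; rw [hF]; exact ENNReal.toReal_nonneg
  have F1 : ∀ t x, F t x ≤ 1 := by
    intro t x
    rw [hF]
    have := hprob t
    have h := MeasureTheory.prob_le_one (μ := ν t) (s := Set.Iic x)
    calc (ν t (Set.Iic x)).toReal ≤ (1 : ENNReal).toReal :=
          ENNReal.toReal_mono (by simp) h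
      _ = 1 := by simp
  have Fneg : ∀ t (x : ℝ), x < 0 → F t x = 0 := by
    intro t x hx
    rw [hF]
    have : ν t (Set.Iic x) = 0 :=
      MeasureTheory.measure_mono_null (fun z hz => lt_of_le_of_lt hz hx) (hpos t)
    simp [this]
  have fnn : ∀ t (j : ℤ), 0 ≤ f t j := by
    intro t j
    rw [hf]
    have := Fmono t (show (j : ℝ) * θ ≤ ((j : ℝ) + 1) * θ by nlinarith)
    linarith
  have telescope : ∀ t (M : ℤ), (-1 : ℤ) ≤ M →
      ∑ j ∈ Finset.Icc (-1 : ℤ) M, f t j = F t (((M : ℝ) + 1) * θ) - F t (-θ) := by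
    intro t
    refine fun M hM => Int.le_induction
      (motive := fun M _ => ∑ j ∈ Finset.Icc (-1 : ℤ) M, f t j = F t (((M : ℝ) + 1) * θ) - F t (-θ))
      ?_ ?_ M hM
    · show ∑ j ∈ Finset.Icc (-1 : ℤ) (-1), f t j = _
      rw [Finset.Icc_self, Finset.sum_singleton, hf]
      norm_num
    · intro M hM ih
      show ∑ j ∈ Finset.Icc (-1 : ℤ) (M + 1), f t j = _
      have hins : Finset.Icc (-1 : ℤ) (M + 1) = insert (M + 1) (Finset.Icc (-1 : ℤ) M) := by
        ext j
        simp only [Finset.mem_Icc, Finset.mem_insert]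
        omega
      rw [hins, Finset.sum_insert (by simp [Finset.mem_Icc])]
      rw [ih, hf]
      push_cast
      ring_nf
  -- grid predicate
  set G : ℝ → Prop := fun w => ∃ m : ℤ, w = (m : ℝ) * θ with hG
  have Gmax : ∀ a b : ℝ, G a → G b → G (max a b) := by
    rintro a b ⟨m, hm⟩ ⟨m', hm'⟩
    refine ⟨max m m', ?_⟩
    rw [hm, hm', Int.cast_max, max_mul_of_nonneg _ _ hθ.le]
  have gridS : ∀ τ, τ + 2 ≤ T → G (S τ) := by
    intro τ hτ
    exact (hSdef τ hτ).1.1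
  have grids : ∀ τ, τ + 2 ≤ T → G (s τ) := by
    intro τ hτ
    rcases eq_or_lt_of_le (hK0 τ (by omega)) with h | h
    · rw [hsdef0 τ hτ h.symm]; exact gridS τ hτ
    · exact (hsdef1 τ hτ h).1.1
  have Pnn : ∀ d τ, τ + d < T → ∀ y : ℝ, 0 ≤ Paux α θ γ F s d τ y :=
    Paux_nonneg α θ γ F s T hα0.le F0 hγ
  have Pmono : ∀ d τ, τ + d < T → ∀ y z : ℝ, y ≤ z →
      Paux α θ γ F s d τ y ≤ Paux α θ γ F s d τ z :=
    Paux_mono α θ γ F s T hα0.le F0 Fmono hγ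
  -- the key induction
  have key : ∀ kk τ : ℕ, τ + kk + 1 = T →
      (∀ y : ℝ, G y → psib τ θ y ≤ θ * (γ τ + Paux α θ γ F s kk τ y)) ∧
      (∀ y : ℝ, G y → s τ ≤ y → phib τ θ y ≤ θ * (γ τ + Paux α θ γ F s kk τ y)) := by
    intro kk
    induction kk with
    | zero =>
      intro τ hτ
      have hτ' : τ = T - 1 := by omega
      subst hτ'
      constructor
      · intro y _
        rw [hpsibT1]
        simp only [Paux]
        exact le_of_eq (by ring)
      · intro y _ hsy
        rw [hphibT1, if_neg (not_lt.2 hsy)]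
        simp only [Paux]
        exact le_of_eq (by ring)
    | succ kk ih =>
      intro τ hτ
      have hτ2 : τ + 2 ≤ T := by omega
      have ih' := ih (τ + 1) (by omega)
      have hpsi : ∀ y : ℝ, G y → psib τ θ y ≤ θ * (γ τ + Paux α θ γ F s (kk + 1) τ y) := by
        intro y hy
        by_cases hc : y < s (τ + 1) - θ
        · rw [hpsibA τ hτ2 θ y hc]
          have hP : 0 ≤ Paux α θ γ F s (kk + 1) τ y := Pnn (kk + 1) τ (by omega) y
          nlinarith [mul_nonneg hθ.le hP]
        · push_neg at hc
          set u : ℝ := (y - s (τ + 1)) / θ with hu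
          set n : ℤ := ⌊u⌋ + 1 with hn
          have hθ' : θ ≠ 0 := ne_of_gt hθ
          have hun : u * θ = y - s (τ + 1) := div_mul_cancel₀ _ hθ'
          have h1 : ((n : ℝ) - 1) * θ ≤ y - s (τ + 1) := by
            have h := Int.floor_le u
            have h' : ((⌊u⌋ : ℝ)) * θ ≤ u * θ := mul_le_mul_of_nonneg_right h hθ.le
            have hcast : ((n : ℝ) - 1) = ((⌊u⌋ : ℝ)) := by rw [hn]; push_cast; ring
            rw [hcast]
            linarith [hun]
          have h2 : y - s (τ + 1) < (n : ℝ) * θ := by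
            have h := Int.lt_floor_add_one u
            have h' : u * θ < ((⌊u⌋ : ℝ) + 1) * θ := mul_lt_mul_of_pos_right h hθ
            have hcast : ((n : ℝ)) = ((⌊u⌋ : ℝ) + 1) := by rw [hn]; push_cast; ring
            rw [hcast]
            linarith [hun]
          have hn0 : (0 : ℤ) ≤ n := by
            have h3 : (-1 : ℝ) * θ < (n : ℝ) * θ := by nlinarith
            have h4 : (-1 : ℝ) < (n : ℝ) := lt_of_mul_lt_mul_right (by linarith [h3]) hθ.le
            have h5 : (-1 : ℤ) < n := by exact_mod_cast h4
            omega
          rw [hpsibB τ hτ2 θ y hc n h1 h2]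
          set c : ℝ := θ * (γ (τ + 1) + Paux α θ γ F s kk (τ + 1) (y + θ)) with hcdef
          have hcnn : 0 ≤ c :=
            mul_nonneg hθ.le (add_nonneg (hγ (τ + 1) (by omega)) (Pnn kk (τ + 1) (by omega) _))
          have hterm : ∀ j ∈ Finset.Icc (-1 : ℤ) (n - 1),
              phib (τ + 1) θ (y - (j : ℝ) * θ) * f τ j ≤ c * f τ j := by
            intro j hj
            rw [Finset.mem_Icc] at hj
            have hyj : s (τ + 1) ≤ y - (j : ℝ) * θ := by
              have hjr : ((j : ℝ)) ≤ ((n : ℝ)) - 1 := by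
                have := hj.2
                have : ((j : ℝ)) ≤ (((n - 1 : ℤ)) : ℝ) := by exact_mod_cast this
                push_cast at this
                linarith
              nlinarith [h1]
            have hGyj : G (y - (j : ℝ) * θ) := by
              obtain ⟨m, hm⟩ := hy
              exact ⟨m - j, by push_cast; rw [hm]; ring⟩
            have hb := ih'.2 (y - (j : ℝ) * θ) hGyj hyj
            have hjm : y - (j : ℝ) * θ ≤ y + θ := by
              have : (-1 : ℝ) ≤ (j : ℝ) := by exact_mod_cast hj.1
              nlinarith
            have hPm : Paux α θ γ F s kk (τ + 1) (y - (j : ℝ) * θ)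
                ≤ Paux α θ γ F s kk (τ + 1) (y + θ) :=
              Pmono kk (τ + 1) (by omega) _ _ hjm
            have hphc : phib (τ + 1) θ (y - (j : ℝ) * θ) ≤ c := by
              refine le_trans hb ?_
              rw [hcdef]
              exact mul_le_mul_of_nonneg_left (add_le_add (le_refl _) hPm) hθ.le
            exact mul_le_mul_of_nonneg_right hphc (fnn τ j)
          have hsum := Finset.sum_le_sum hterm
          rw [← Finset.mul_sum] at hsum
          have htel := telescope τ (n - 1) (by omega)
          have harg : ((((n - 1 : ℤ)) : ℝ) + 1) * θ = (n : ℝ) * θ := by push_cast; ring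
          rw [harg, Fneg τ (-θ) (by linarith), sub_zero] at htel
          rw [htel] at hsum
          have hFle : F τ ((n : ℝ) * θ) ≤ F τ (y + θ - s (τ + 1)) := by
            apply Fmono τ
            nlinarith [h1]
          have hchain : ∑ j ∈ Finset.Icc (-1 : ℤ) (n - 1), phib (τ + 1) θ (y - (j : ℝ) * θ) * f τ j
              ≤ c * F τ (y + θ - s (τ + 1)) :=
            le_trans hsum (mul_le_mul_of_nonneg_left hFle hcnn)
          have hPsucc : θ * (γ τ + Paux α θ γ F s (kk + 1) τ y)
              = γ τ * θ + α * (c * F τ (y + θ - s (τ + 1))) := by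
            rw [Paux_succ, hcdef]
            ring
          rw [hPsucc]
          have := mul_le_mul_of_nonneg_left hchain hα0.le
          linarith
      refine ⟨hpsi, ?_⟩
      intro y hy hsy
      rw [hphib τ hτ2 θ y, if_neg (not_lt.2 hsy)]
      by_cases hb : y - θ < s τ
      · have hGs : G (s τ) := grids τ hτ2
        obtain ⟨a, ha⟩ := id hy
        obtain ⟨b, hb'⟩ := hGs
        have hba : (b : ℝ) * θ ≤ (a : ℝ) * θ := by rw [← ha, ← hb']; exact hsy
        have hab : (a : ℝ) * θ < ((b : ℝ) + 1) * θ := by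
          rw [← ha]
          nlinarith [hb, hb']
        have hba' : b ≤ a := by
          have := le_of_mul_le_mul_right (by linarith [hba] : (b : ℝ) * θ ≤ (a : ℝ) * θ) hθ
          exact_mod_cast this
        have hab' : a < b + 1 := by
          have h := lt_of_mul_lt_mul_right (by linarith [hab] : (a : ℝ) * θ < ((b : ℝ) + 1) * θ) hθ.le
          have : (a : ℝ) < ((b + 1 : ℤ) : ℝ) := by push_cast; linarith
          exact_mod_cast this
        have hae : a = b := by omega
        have hys : y = s τ := by rw [ha, hb', hae]
        rw [if_pos hb, show y - s τ + θ = θ from by rw [hys]; ring]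
        exact hpsi y hy
      · rw [if_neg hb]
        exact hpsi y hy
  -- final assembly
  intro t ht k
  have hGlam : ∀ i, t + i + 2 ≤ T → G (lam t k i) := by
    intro i
    induction i with
    | zero => intro _; rw [hlam0]; exact ⟨k, rfl⟩
    | succ i ihh =>
      intro h
      rw [hlamS]
      obtain ⟨m, hm⟩ := Gmax _ _ (ihh (by omega)) (gridS (t + i) (by omega))
      exact ⟨m + 1, by push_cast; rw [hm]; ring⟩
  constructor
  · rw [hepsbRec t k ht]
    apply add_le_add le_rfl
    have hperi : ∀ i ∈ Finset.range (T - 2 - t),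
        2 * α ^ i * (psib (t + i) θ (max (lam t k i) (S (t + i))) - γ (t + i) * θ)
          ≤ 2 * θ * ∑ n ∈ Finset.Icc 1 (T - 1 - t - i),
              α ^ (n + i) * γ (t + i + n)
                * ∏ m ∈ Finset.range n,
                    F (t + i + m) (max (lam t k i) (S (t + i)) + ((m : ℝ) + 1) * θ - s (t + i + m + 1)) := by
      intro i hi
      rw [Finset.mem_range] at hi
      have hti2 : (t + i) + 2 ≤ T := by omega
      have hGM : G (max (lam t k i) (S (t + i))) :=
        Gmax _ _ (hGlam i (by omega)) (gridS (t + i) hti2)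
      have hkey := (key (T - 1 - (t + i)) (t + i) (by omega)).1 _ hGM
      have hidx : T - 1 - t - i = T - 1 - (t + i) := by omega
      have hRHS : ∑ n ∈ Finset.Icc 1 (T - 1 - t - i),
          α ^ (n + i) * γ (t + i + n)
            * ∏ m ∈ Finset.range n,
                F (t + i + m) (max (lam t k i) (S (t + i)) + ((m : ℝ) + 1) * θ - s (t + i + m + 1))
          = α ^ i * Paux α θ γ F s (T - 1 - (t + i)) (t + i) (max (lam t k i) (S (t + i))) := by
        rw [Paux_eq, hidx, Finset.mul_sum]
        apply Finset.sum_congr rfl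
        intro n _
        rw [pow_add]
        ring
      rw [hRHS]
      have hαi : (0 : ℝ) ≤ α ^ i := pow_nonneg hα0.le i
      have hsub : psib (t + i) θ (max (lam t k i) (S (t + i))) - γ (t + i) * θ
          ≤ θ * Paux α θ γ F s (T - 1 - (t + i)) (t + i) (max (lam t k i) (S (t + i))) := by
        nlinarith [hkey]
      nlinarith [mul_le_mul_of_nonneg_left hsub hαi]
    rw [Finset.mul_sum]
    exact Finset.sum_le_sum hperi
  · apply add_le_add le_rfl
    apply mul_le_mul_of_nonneg_left _ (by linarith : (0 : ℝ) ≤ 2 * θ)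
    apply Finset.sum_le_sum
    intro i hi
    apply Finset.sum_le_sum
    intro n hn
    rw [Finset.mem_range] at hi
    rw [Finset.mem_Icc] at hn
    have hnn : 0 ≤ α ^ (n + i) * γ (t + i + n) :=
      mul_nonneg (pow_nonneg hα0.le _) (hγ _ (by omega))
    exact mul_le_of_le_one_right hnn
      (Finset.prod_le_one (fun m _ => F0 _ _) (fun m _ => F1 _ _))
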